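/- Let the n columns of an n×n matrix P be independently sampled from the uniform distribution on the (n−1)-dimensional probability simplex. Then, with probability 1, there exist no m < n(n−1), no matrix M ∈ {0,1}^{n²×m}, and no vector e ∈ ℝ₊^m with ∑ᵢ e(i) = 1 such that vec(P) = M e, where vec stacks the columns of P. -/

import Mathlib

open MeasureTheory

open Set
open scoped NNReal ENNReal

/-- The uniform probability measure on the `(k-1)`-dimensional probability simplex
`{x ∈ ℝᵏ : x ≥ 0, ∑ᵢ xᵢ = 1}`: the `(k-1)`-dimensional Hausdorff (surface) measure
restricted to the simplex and normalized to total mass `1`. -/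
noncomputable def uniformSimplex (k : ℕ) : Measure (Fin k → ℝ) :=
  (μH[(k : ℝ) - 1] (stdSimplex ℝ (Fin k)))⁻¹ •
    (μH[(k : ℝ) - 1]).restrict (stdSimplex ℝ (Fin k))

section Aux

/-- Monotonicity of finite product measures. -/
theorem NSD.pi_mono {ι : Type*} [Fintype ι] {α : ι → Type*} [∀ i, MeasurableSpace (α i)]
    {μ ν : ∀ i, Measure (α i)} (h : ∀ i, μ i ≤ ν i) : Measure.pi μ ≤ Measure.pi ν := by
  have houter : (OuterMeasure.pi fun i => (μ i).toOuterMeasure)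
      ≤ OuterMeasure.pi fun i => (ν i).toOuterMeasure := by
    rw [OuterMeasure.le_pi]
    intro s _
    refine (OuterMeasure.pi_pi_le _ s).trans ?_
    exact Finset.prod_le_prod' fun i _ => (h i) (s i)
  intro s
  calc Measure.pi μ s ≤ Measure.pi μ (toMeasurable (Measure.pi ν) s) :=
        measure_mono (subset_toMeasurable _ _)
    _ ≤ Measure.pi ν (toMeasurable (Measure.pi ν) s) := by
        rw [Measure.pi, Measure.pi,
          toMeasure_apply _ _ (measurableSet_toMeasurable _ _),
          toMeasure_apply _ _ (measurableSet_toMeasurable _ _)]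
        exact houter _
    _ = Measure.pi ν s := measure_toMeasurable s

/-- Scalar multiples and finite product measures. -/
theorem NSD.pi_smul {ι : Type*} [Fintype ι] {α : ι → Type*} [∀ i, MeasurableSpace (α i)]
    (c : ℝ≥0) (μ : ∀ i, Measure (α i)) [∀ i, IsFiniteMeasure (μ i)] :
    Measure.pi (fun i => c • μ i) = (c ^ (Fintype.card ι) : ℝ≥0) • Measure.pi μ := by
  haveI : ∀ i, SigmaFinite (c • μ i) := fun i => inferInstance
  refine Measure.pi_eq (μ := fun i => c • μ i) fun s hs => ?_
  rw [Measure.smul_apply, Measure.pi_pi]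
  simp only [Measure.smul_apply, ENNReal.smul_def, smul_eq_mul, Finset.prod_mul_distrib,
    Finset.prod_const, Finset.card_univ, ENNReal.coe_pow]

variable (k : ℕ)

/-- The affine parametrization of the hyperplane containing the simplex. -/
noncomputable def NSD.phi : (Fin k → ℝ) → (Fin (k+1) → ℝ) :=
  fun x => Fin.snoc x (1 - ∑ i, x i)

namespace NSD

theorem phi_lip : LipschitzWith (k+1 : ℝ≥0) (phi k) := by
  apply LipschitzWith.of_dist_le_mul
  intro x y
  rw [dist_pi_le_iff (by positivity)]
  intro i
  induction i using Fin.lastCases with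
  | last =>
      simp only [phi, Fin.snoc_last]
      rw [Real.dist_eq]
      have : (1 - ∑ i, x i) - (1 - ∑ i, y i) = ∑ i, (y i - x i) := by
        rw [Finset.sum_sub_distrib]; ring
      rw [this]
      calc |∑ i, (y i - x i)| ≤ ∑ i, |y i - x i| := Finset.abs_sum_le_sum_abs _ _
        _ ≤ ∑ _i : Fin k, dist x y := by
            refine Finset.sum_le_sum fun i _ => ?_
            rw [← Real.dist_eq, dist_comm x y]; exact dist_le_pi_dist y x i
        _ = k * dist x y := by simp [Finset.sum_const, nsmul_eq_mul]
        _ ≤ (k+1) * dist x y := by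
            have := dist_nonneg (x := x) (y := y); nlinarith
  | cast j =>
      simp only [phi, Fin.snoc_castSucc]
      calc dist (x j) (y j) ≤ dist x y := dist_le_pi_dist x y j
        _ ≤ (k+1) * dist x y := by
            have := dist_nonneg (x := x) (y := y); nlinarith

theorem phi_cont : Continuous (phi k) := by
  apply continuous_pi
  intro i
  induction i using Fin.lastCases with
  | last => simp only [phi, Fin.snoc_last]; exact
      (continuous_const.sub (continuous_finset_sum _ fun j _ => continuous_apply j))
  | cast j => simpa [phi] using continuous_apply j

theorem simplex_subset_range : stdSimplex ℝ (Fin (k+1)) ⊆ Set.range (phi k) := by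
  intro p hp
  refine ⟨Fin.init p, funext fun i => ?_⟩
  induction i using Fin.lastCases with
  | last =>
      simp only [phi, Fin.snoc_last]
      have := hp.2
      rw [Fin.sum_univ_castSucc] at this
      simp only [Fin.init]
      linarith
  | cast j => simp [phi, Fin.init]

/-- `μH[k]` on `Fin k → ℝ` is the Lebesgue measure. -/
theorem hmeas_eq_volume : (μH[(k:ℝ)] : Measure (Fin k → ℝ)) = volume := by
  have := MeasureTheory.hausdorffMeasure_pi_real (ι := Fin k)
  simpa using this

theorem image_bound (s : Set (Fin k → ℝ)) :
    μH[(k:ℝ)] (phi k '' s) ≤ ((k:ℝ≥0)+1) ^ (k:ℝ) * volume s := by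
  rw [← hmeas_eq_volume]
  have := (phi_lip k).hausdorffMeasure_image_le (d := (k:ℝ)) (by positivity) s
  simpa using this

/-- The preimage of the simplex under `phi`. -/
def simplexPre : Set (Fin k → ℝ) := (phi k) ⁻¹' (stdSimplex ℝ (Fin (k+1)))

theorem simplexPre_subset_box : simplexPre k ⊆ Set.pi univ fun _ => Icc (0:ℝ) 1 := by
  intro x hx
  have h0 : ∀ i, 0 ≤ phi k x i := hx.1
  have hsum : ∑ i, x i ≤ 1 := by
    have hl := h0 (Fin.last k)
    simp only [phi, Fin.snoc_last] at hl
    linarith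
  intro j _
  constructor
  · have := h0 (Fin.castSucc j); simpa [phi] using this
  · have hle : x j ≤ ∑ i, x i := by
      refine Finset.single_le_sum (fun i _ => ?_) (Finset.mem_univ j)
      have := h0 (Fin.castSucc i); simpa [phi] using this
    linarith

theorem simplexPre_box_subset :
    (Set.pi univ fun _ : Fin k => Icc (0:ℝ) (1/(k+1))) ⊆ simplexPre k := by
  intro x hx
  have h0 : ∀ j, 0 ≤ x j := fun j => (hx j (mem_univ j)).1
  have h1 : ∀ j, x j ≤ 1/(k+1) := fun j => (hx j (mem_univ j)).2
  have hsum : ∑ i, x i ≤ 1 := by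
    calc ∑ i, x i ≤ ∑ _i : Fin k, (1/(k+1) : ℝ) := Finset.sum_le_sum fun i _ => h1 i
      _ = k * (1/(k+1)) := by simp [Finset.sum_const, nsmul_eq_mul]
      _ ≤ 1 := by rw [mul_one_div, div_le_one (by positivity)]; linarith
  constructor
  · intro i
    induction i using Fin.lastCases with
    | last => simp only [phi, Fin.snoc_last]; linarith
    | cast j => simpa [phi] using h0 j
  · rw [Fin.sum_univ_castSucc]
    simp [phi]

theorem volume_simplexPre_pos : 0 < volume (simplexPre k) := by
  refine lt_of_lt_of_le ?_ (measure_mono (simplexPre_box_subset k))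
  rw [volume_pi_pi, Finset.prod_const]
  have : (0:ℝ≥0∞) < volume (Icc (0:ℝ) (1/(k+1))) := by
    rw [Real.volume_Icc]
    simp only [sub_zero]
    apply ENNReal.ofReal_pos.mpr
    positivity
  exact pos_iff_ne_zero.mpr (pow_ne_zero _ (pos_iff_ne_zero.mp this))

theorem volume_simplexPre_lt_top : volume (simplexPre k) < ⊤ := by
  refine lt_of_le_of_lt (measure_mono (simplexPre_subset_box k)) ?_
  rw [volume_pi_pi]
  simp [Real.volume_Icc]

/-- Hausdorff measure of subsets of the simplex compared to Lebesgue measure of preimage. -/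
theorem hausdorff_le (t : Set (Fin (k+1) → ℝ)) (ht : t ⊆ stdSimplex ℝ (Fin (k+1))) :
    μH[(k:ℝ)] t ≤ ((k:ℝ≥0)+1) ^ (k:ℝ) * volume ((phi k) ⁻¹' t) := by
  have himg : phi k '' ((phi k) ⁻¹' t) = t := by
    rw [Set.image_preimage_eq_inter_range, Set.inter_eq_self_of_subset_left
      (ht.trans (simplex_subset_range k))]
  calc μH[(k:ℝ)] t = μH[(k:ℝ)] (phi k '' ((phi k) ⁻¹' t)) := by rw [himg]
    _ ≤ _ := image_bound k _

theorem hsimplex_pos : 0 < μH[(k:ℝ)] (stdSimplex ℝ (Fin (k+1))) := by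
  have hproj : LipschitzWith 1 (fun (p : Fin (k+1) → ℝ) (j : Fin k) => p (Fin.castSucc j)) := by
    apply LipschitzWith.of_dist_le_mul
    intro p q
    simp only [NNReal.coe_one, one_mul]
    rw [dist_pi_le_iff dist_nonneg]
    intro j
    exact dist_le_pi_dist p q (Fin.castSucc j)
  have hsub : simplexPre k ⊆ (fun (p : Fin (k+1) → ℝ) (j : Fin k) => p (Fin.castSucc j)) ''
      (stdSimplex ℝ (Fin (k+1))) := by
    intro x hx
    refine ⟨phi k x, hx, funext fun j => ?_⟩
    simp [phi]
  have h1 : volume (simplexPre k) ≤ μH[(k:ℝ)] (stdSimplex ℝ (Fin (k+1))) := by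
    rw [← hmeas_eq_volume]
    refine (measure_mono hsub).trans ?_
    have := hproj.hausdorffMeasure_image_le (d := (k:ℝ)) (by positivity)
      (stdSimplex ℝ (Fin (k+1)))
    simpa using this
  exact lt_of_lt_of_le (volume_simplexPre_pos k) h1

/-- The comparison constant. -/
noncomputable def Kbig : ℝ≥0∞ :=
  (μH[(k:ℝ)] (stdSimplex ℝ (Fin (k+1))))⁻¹ * ((k:ℝ≥0)+1) ^ (k:ℝ)

theorem Kbig_ne_top : Kbig k ≠ ⊤ := by
  apply ENNReal.mul_ne_top
  · exact ENNReal.inv_ne_top.mpr (hsimplex_pos k).ne'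
  · exact (ENNReal.rpow_lt_top_of_nonneg (by positivity) (by simp)).ne

noncomputable def Knn : ℝ≥0 := (Kbig k).toNNReal

/-- The comparison measure: pushforward of restricted Lebesgue measure under `phi`. -/
noncomputable def nu0 : Measure (Fin (k+1) → ℝ) :=
  Measure.map (phi k) (volume.restrict (simplexPre k))

instance : IsFiniteMeasure (volume.restrict (simplexPre k)) :=
  ⟨by rw [Measure.restrict_apply_univ]; exact volume_simplexPre_lt_top k⟩

instance : IsFiniteMeasure (nu0 k) := by
  constructor
  rw [nu0, Measure.map_apply (phi_cont k).measurable MeasurableSet.univ,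
    Set.preimage_univ, Measure.restrict_apply_univ]
  exact volume_simplexPre_lt_top k

theorem cast_succ_sub_one : ((k+1 : ℕ) : ℝ) - 1 = (k : ℝ) := by push_cast; ring

/-- The key domination of the uniform simplex measure. -/
theorem uniformSimplex_le : uniformSimplex (k+1) ≤ Knn k • nu0 k := by
  have hd : uniformSimplex (k+1) =
      (μH[(k:ℝ)] (stdSimplex ℝ (Fin (k+1))))⁻¹ •
        (μH[(k:ℝ)]).restrict (stdSimplex ℝ (Fin (k+1))) := by
    rw [uniformSimplex, cast_succ_sub_one]
  rw [hd]
  refine Measure.le_iff.mpr fun s hs => ?_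
  rw [Measure.smul_apply, Measure.restrict_apply hs, smul_eq_mul]
  have hle := hausdorff_le k (s ∩ stdSimplex ℝ (Fin (k+1))) inter_subset_right
  have h2 : (Knn k • nu0 k) s = Kbig k * volume ((phi k) ⁻¹' s ∩ simplexPre k) := by
    rw [Measure.smul_apply, nu0, Measure.map_apply (phi_cont k).measurable hs,
      Measure.restrict_apply ((phi_cont k).measurable hs), ENNReal.smul_def, smul_eq_mul,
      Knn, ENNReal.coe_toNNReal (Kbig_ne_top k)]
  rw [h2, Kbig, mul_assoc]
  refine mul_le_mul_of_nonneg_left ?_ (by positivity)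
  refine hle.trans ?_
  rw [Set.preimage_inter]
  rfl

/-- Affine spans of fewer than `(k+1)*k` points are Lebesgue-null. -/
theorem span_null (m : ℕ) (hm : m < (k+1)*k) (v : Fin m → (Fin (k+1) → Fin k → ℝ)) :
    (volume : Measure (Fin (k+1) → Fin k → ℝ)) (affineSpan ℝ (Set.range v)) = 0 := by
  refine Measure.addHaar_affineSubspace _ _ ?_
  intro htop
  rcases m with - | m'
  · rw [Set.range_eq_empty v, AffineSubspace.span_empty] at htop
    exact AffineSubspace.bot_ne_top ℝ (Fin (k+1) → Fin k → ℝ) (Fin (k+1) → Fin k → ℝ) htop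
  · have hrank := finrank_vectorSpan_range_le ℝ v (Fintype.card_fin (m'+1))
    rw [← direction_affineSpan, htop, AffineSubspace.direction_top, finrank_top] at hrank
    have hfr : Module.finrank ℝ (Fin (k+1) → Fin k → ℝ) = (k+1)*k := by
      simp [Module.finrank_pi_fintype, Module.finrank_pi, Finset.sum_const]
    omega

/-- Main step: for a fixed binary pattern, the decomposable matrices are null. -/
theorem D_null (m : ℕ) (hm : m < (k+1)*k) (b : Fin (k+1) → Fin (k+1) → Fin m → Bool) :
    (Measure.pi fun _ : Fin (k+1) => uniformSimplex (k+1))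
      ((fun (e : Fin m → ℝ) (j : Fin (k+1)) (i : Fin (k+1)) =>
        ∑ t, (if b i j t then (1:ℝ) else 0) * e t) '' (stdSimplex ℝ (Fin m))) = 0 := by
  set g : (Fin m → ℝ) → (Fin (k+1) → Fin (k+1) → ℝ) :=
    fun e j i => ∑ t, (if b i j t then (1:ℝ) else 0) * e t with hg
  set D : Set (Fin (k+1) → Fin (k+1) → ℝ) := g '' (stdSimplex ℝ (Fin m)) with hD
  have hgc : Continuous g := by
    refine continuous_pi fun j => continuous_pi fun i => ?_
    exact continuous_finset_sum _ fun t _ => continuous_const.mul (continuous_apply t)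
  have hDm : MeasurableSet D :=
    (((isCompact_stdSimplex _ _).image hgc).isClosed).measurableSet
  set v : Fin m → (Fin (k+1) → Fin k → ℝ) :=
    fun t j i => if b (Fin.castSucc i) j t then (1:ℝ) else 0 with hv
  set Φ : (Fin (k+1) → Fin k → ℝ) → (Fin (k+1) → Fin (k+1) → ℝ) :=
    fun x j => phi k (x j) with hΦ
  have hΦm : Measurable Φ :=
    measurable_pi_iff.mpr fun j => (phi_cont k).measurable.comp (measurable_pi_apply j)
  have hsub : Φ ⁻¹' D ⊆ (affineSpan ℝ (Set.range v) : Set _) := by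
    intro x hx
    obtain ⟨e, he, hge⟩ := hx
    have hx_eq : x = ∑ t, e t • v t := by
      funext j i
      have h12 : x j i = g e j (Fin.castSucc i) := by
        rw [hge]
        show x j i = phi k (x j) (Fin.castSucc i)
        simp [phi]
      rw [h12]
      simp only [hg, hv, Finset.sum_apply, Pi.smul_apply, smul_eq_mul]
      exact Finset.sum_congr rfl fun t _ => mul_comm _ _
    rw [hx_eq, ← Finset.univ.affineCombination_eq_linear_combination v e he.2]
    exact affineCombination_mem_affineSpan he.2 v
  have hmp : MeasurePreserving Φ
      (Measure.pi fun _ : Fin (k+1) => volume.restrict (simplexPre k))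
      (Measure.pi fun _ : Fin (k+1) => nu0 k) :=
    measurePreserving_pi _ _ (fun _ => ⟨(phi_cont k).measurable, rfl⟩)
  have hchain : (Measure.pi fun _ : Fin (k+1) => uniformSimplex (k+1)) D ≤ 0 := by
    calc (Measure.pi fun _ : Fin (k+1) => uniformSimplex (k+1)) D
        ≤ (Measure.pi fun _ : Fin (k+1) => Knn k • nu0 k) D :=
          (NSD.pi_mono fun _ => uniformSimplex_le k) D
      _ = ((Knn k ^ (k+1) : ℝ≥0) : ℝ≥0∞) *
            (Measure.pi fun _ : Fin (k+1) => nu0 k) D := by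
          rw [NSD.pi_smul]
          simp [ENNReal.smul_def]
      _ = ((Knn k ^ (k+1) : ℝ≥0) : ℝ≥0∞) *
            (Measure.pi fun _ : Fin (k+1) => volume.restrict (simplexPre k)) (Φ ⁻¹' D) := by
          rw [← hmp.map_eq, Measure.map_apply hΦm hDm]
      _ ≤ ((Knn k ^ (k+1) : ℝ≥0) : ℝ≥0∞) *
            (Measure.pi fun _ : Fin (k+1) => (volume : Measure (Fin k → ℝ)))
              ((affineSpan ℝ (Set.range v) : Set _)) := by
          refine mul_le_mul_of_nonneg_left ?_ (by positivity)
          refine le_trans (measure_mono hsub) ?_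
          exact (NSD.pi_mono fun _ => Measure.restrict_le_self) _
      _ = 0 := by
          rw [← MeasureTheory.volume_pi, span_null k m hm v, mul_zero]
  exact nonpos_iff_eq_zero.mp hchain

end NSD

end Aux

/-- **Generic conditional matrices need `n(n-1)` terms.**
If the `n` columns of an `n × n` matrix `P` (here `P j` is column `j`) are sampled
independently and uniformly from the `(n-1)`-dimensional probability simplex, then with
probability `1` there exist no `m < n(n-1)`, no `{0,1}` matrix `M ∈ {0,1}^{n²×m}` and no
nonnegative vector `e ∈ ℝ₊^m` summing to `1` with `vec(P) = M e`, i.e. with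
`P j i = ∑ₖ M i j k · e k` for all `i, j`. -/
theorem no_small_decomposition_ae (n : ℕ) (hn : 0 < n) :
    ∀ᵐ P ∂(Measure.pi fun _ : Fin n => uniformSimplex n),
      ¬ ∃ (m : ℕ) (_ : m < n * (n - 1)) (M : Fin n → Fin n → Fin m → ℝ)
          (e : Fin m → ℝ),
          (∀ i j k, M i j k = 0 ∨ M i j k = 1) ∧
          (∀ k, 0 ≤ e k) ∧ (∑ k, e k = 1) ∧
          (∀ i j, P j i = ∑ k, M i j k * e k) := by
  classical
  obtain ⟨k, rfl⟩ : ∃ k, n = k + 1 := ⟨n - 1, (Nat.succ_pred_eq_of_pos hn).symm⟩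
  rw [ae_iff]
  simp only [not_not]
  refine measure_mono_null (t := ⋃ (m : Fin ((k+1)*k)),
    ⋃ (b : Fin (k+1) → Fin (k+1) → Fin (m : ℕ) → Bool),
      (fun (e : Fin (m : ℕ) → ℝ) (j : Fin (k+1)) (i : Fin (k+1)) =>
        ∑ t, (if b i j t then (1:ℝ) else 0) * e t) '' (stdSimplex ℝ (Fin (m : ℕ))))
    ?_ ?_
  · intro P hP
    obtain ⟨m, hm, M, e, hM, he0, he1, hPe⟩ := hP
    have hm' : m < (k+1)*k := by simpa using hm
    refine Set.mem_iUnion.mpr ⟨⟨m, hm'⟩, Set.mem_iUnion.mpr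
      ⟨fun i j t => if M i j t = 1 then true else false, ⟨e, ⟨he0, he1⟩, ?_⟩⟩⟩
    funext j i
    rw [hPe i j]
    refine (Finset.sum_congr rfl fun t _ => ?_).symm
    rcases hM i j t with h | h
    · simp [h]
    · simp [h]
  · refine measure_iUnion_null fun m => measure_iUnion_null fun b => ?_
    exact NSD.D_null k (m : ℕ) m.2 b
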